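/- Let A and B be m×n binary matrices. If every row of both A and B consists entirely of 0's or entirely of 1's, or if every column of both A and B consists entirely of 0's or entirely of 1's, then G^k(A,B) is word-representable for every integer k ≥ 0. -/

import Mathlib

/-- A word `w` over alphabet `V` represents the graph `G`: every vertex occurs in `w`,
and two distinct vertices are adjacent iff their letters alternate in `w`. -/
def WordRepresents {V : Type*} [DecidableEq V] (w : List V) (G : SimpleGraph V) : Prop :=
  (∀ v : V, v ∈ w) ∧
  ∀ x y : V, x ≠ y →
    (G.Adj x y ↔ (w.filter (fun z => z == x || z == y)).Chain' (· ≠ ·))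

/-- A graph is word-representable if some word represents it. -/
def WordRepresentable {V : Type*} [DecidableEq V] (G : SimpleGraph V) : Prop :=
  ∃ w : List V, WordRepresents w G

/-- The split graph `G(M)` of an `m × n` binary matrix `M`: vertices `Sum.inl j`
(`j : Fin n`) form a clique, vertices `Sum.inr i` (`i : Fin m`) form an independent set,
and `Sum.inr i` is adjacent to `Sum.inl j` iff `M i j = true`. -/
def splitGraph {m n : ℕ} (M : Fin m → Fin n → Bool) : SimpleGraph (Fin n ⊕ Fin m) :=
  SimpleGraph.fromRel (fun x y =>
    match x, y with
    | Sum.inl _, Sum.inl _ => True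
    | Sum.inl j, Sum.inr i => M i j = true
    | _, _ => False)

/-- `morphIter A B k` is the matrix `M^k(A,B)`, obtained from the `1 × 1` matrix `[0]`
by `k` iterations of the 2-dimensional morphism replacing `0` by the block `A`
and `1` by the block `B`. -/
def morphIter {m n : ℕ} (A B : Fin m → Fin n → Bool) :
    (k : ℕ) → Fin (m ^ k) → Fin (n ^ k) → Bool
  | 0, _, _ => false
  | k + 1, i, j =>
    have hm : 0 < m := Nat.pos_of_ne_zero (fun h => by
      have := i.isLt; simp [h] at this)
    have hn : 0 < n := Nat.pos_of_ne_zero (fun h => by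
      have := j.isLt; simp [h] at this)
    have hR : i.val / m < m ^ k :=
      (Nat.div_lt_iff_lt_mul hm).2 (by rw [← pow_succ]; exact i.isLt)
    have hC : j.val / n < n ^ k :=
      (Nat.div_lt_iff_lt_mul hn).2 (by rw [← pow_succ]; exact j.isLt)
    if morphIter A B k ⟨i.val / m, hR⟩ ⟨j.val / n, hC⟩ then
      B ⟨i.val % m, Nat.mod_lt _ hm⟩ ⟨j.val % n, Nat.mod_lt _ hn⟩
    else
      A ⟨i.val % m, Nat.mod_lt _ hm⟩ ⟨j.val % n, Nat.mod_lt _ hn⟩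

/-- `Gk A B k` is the split graph `G^k(A,B) = G(M^k(A,B))`. -/
def Gk {m n : ℕ} (A B : Fin m → Fin n → Bool) (k : ℕ) :
    SimpleGraph (Fin (n ^ k) ⊕ Fin (m ^ k)) :=
  splitGraph (morphIter A B k)


set_option maxHeartbeats 1000000
set_option linter.unusedSectionVars false
set_option linter.unusedVariables false

section Helpers

variable {α β : Type*} [DecidableEq α] [DecidableEq β]

lemma filter_map_char (l : List α) (hl : l.Nodup) (emb : α → β)
    (p : β → Bool) (a : α) (hp : ∀ b ∈ l, (p (emb b) = true ↔ b = a)) :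
    (l.map emb).filter p = if a ∈ l then [emb a] else [] := by
  rw [List.filter_map]
  have h1 : l.filter (p ∘ emb) = l.filter (· == a) := by
    apply List.filter_congr
    intro b hb
    rw [Bool.eq_iff_iff]
    simp [hp b hb]
  rw [h1, List.filter_beq]
  by_cases hmem : a ∈ l
  · rw [List.count_eq_one_of_mem hl hmem]; simp [hmem]
  · rw [List.count_eq_zero_of_not_mem hmem]; simp [hmem]

lemma filter_map_nil (l : List α) (emb : α → β) (p : β → Bool)
    (hp : ∀ b ∈ l, ¬ p (emb b) = true) :
    (l.map emb).filter p = [] := by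
  rw [List.filter_eq_nil_iff]
  intro z hz
  obtain ⟨b, hb, rfl⟩ := List.mem_map.1 hz
  exact hp b hb

lemma not_chain'_palindrome (q : List β) (hq : q ≠ []) :
    ¬ (q ++ q.reverse).Chain' (· ≠ ·) := by
  rcases List.eq_nil_or_concat q with rfl | ⟨L, b, rfl⟩
  · exact absurd rfl hq
  · intro h
    rw [List.concat_eq_append, List.reverse_concat] at h
    rw [List.append_assoc] at h
    have h2 := h.right_of_append
    simp at h2

end Helpers




lemma rankOne_rep {m n : ℕ} (f : Fin m → Bool) (g : Fin n → Bool) :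
    WordRepresentable (splitGraph (fun i j => f i && g j)) := by
  classical
  set G := splitGraph (fun i j => f i && g j) with hG
  set lT : List (Fin n) := (List.finRange n).filter (fun j => !g j) with hlT
  set lS : List (Fin n) := (List.finRange n).filter (fun j => g j) with hlS
  set lP : List (Fin m) := (List.finRange m).filter (fun i => f i) with hlP
  set lZ : List (Fin m) := (List.finRange m).filter (fun i => !f i) with hlZ
  set T : List (Fin n ⊕ Fin m) := lT.map Sum.inl with hT
  set S : List (Fin n ⊕ Fin m) := lS.map Sum.inl with hS
  set P : List (Fin n ⊕ Fin m) := lP.map Sum.inr with hP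
  set Z : List (Fin n ⊕ Fin m) := lZ.map Sum.inr with hZ
  set W : List (Fin n ⊕ Fin m) := T ++ P ++ S ++ P.reverse ++ Z ++ Z.reverse with hW
  have filterW : ∀ p : (Fin n ⊕ Fin m) → Bool,
      W.filter p = T.filter p ++ P.filter p ++ S.filter p ++ (P.filter p).reverse
        ++ Z.filter p ++ (Z.filter p).reverse := by
    intro p
    simp [hW, List.filter_append, List.filter_reverse]
  have adj_ll : ∀ j j' : Fin n, j ≠ j' → G.Adj (Sum.inl j) (Sum.inl j') := by
    intro j j' hjj
    simp [hG, splitGraph, SimpleGraph.fromRel_adj, hjj]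
  have adj_lr : ∀ (j : Fin n) (i : Fin m),
      G.Adj (Sum.inl j) (Sum.inr i) ↔ (f i && g j) = true := by
    intro j i
    simp [hG, splitGraph, SimpleGraph.fromRel_adj]
  have adj_rr : ∀ i i' : Fin m, ¬ G.Adj (Sum.inr i) (Sum.inr i') := by
    intro i i'
    simp [hG, splitGraph, SimpleGraph.fromRel_adj]
  have keyll : ∀ (j j' : Fin n) (p : (Fin n ⊕ Fin m) → Bool),
      (∀ z, p z = true ↔ (z = Sum.inl j ∨ z = Sum.inl j')) →
      (W.filter p).Chain' (· ≠ ·) := by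
    intro j j' p hp
    have hPf : P.filter p = [] := by
      rw [hP]; apply filter_map_nil; intro b hb; rw [hp]; simp
    have hZf : Z.filter p = [] := by
      rw [hZ]; apply filter_map_nil; intro b hb; rw [hp]; simp
    rw [filterW, hPf, hZf]
    simp only [List.reverse_nil, List.append_nil, List.nil_append]
    rw [← List.filter_append]
    have hTS : (T ++ S).Nodup := by
      rw [hT, hS, ← List.map_append]
      refine List.Nodup.map Sum.inl_injective ?_
      refine List.Nodup.append ((List.nodup_finRange n).filter _)
        ((List.nodup_finRange n).filter _) ?_
      intro a ha hb
      rw [hlT, List.mem_filter] at ha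
      rw [hlS, List.mem_filter] at hb
      rw [hb.2] at ha
      simp at ha
    exact (hTS.filter p).isChain
  have keylr : ∀ (j : Fin n) (i : Fin m) (p : (Fin n ⊕ Fin m) → Bool),
      (∀ z, p z = true ↔ (z = Sum.inl j ∨ z = Sum.inr i)) →
      ((f i && g j) = true ↔ (W.filter p).Chain' (· ≠ ·)) := by
    intro j i p hp
    have hPf : f i = true → P.filter p = [Sum.inr i] := by
      intro hfi
      rw [hP, filter_map_char lP ((List.nodup_finRange m).filter _) Sum.inr p i
        (by intro b hb; rw [hp]; simp)]
      rw [if_pos]; rw [hlP, List.mem_filter]; simp [hfi]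
    have hPf' : f i = false → P.filter p = [] := by
      intro hfi
      rw [hP]; apply filter_map_nil
      intro b hb
      rw [hlP, List.mem_filter] at hb
      have hbi : b ≠ i := by rintro rfl; rw [hfi] at hb; simp at hb
      rw [hp]; simp [hbi]
    have hZf : f i = false → Z.filter p = [Sum.inr i] := by
      intro hfi
      rw [hZ, filter_map_char lZ ((List.nodup_finRange m).filter _) Sum.inr p i
        (by intro b hb; rw [hp]; simp)]
      rw [if_pos]; rw [hlZ, List.mem_filter]; simp [hfi]
    have hZf' : f i = true → Z.filter p = [] := by
      intro hfi
      rw [hZ]; apply filter_map_nil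
      intro b hb
      rw [hlZ, List.mem_filter] at hb
      have hbi : b ≠ i := by rintro rfl; rw [hfi] at hb; simp at hb
      rw [hp]; simp [hbi]
    have hSf : g j = true → S.filter p = [Sum.inl j] := by
      intro hgj
      rw [hS, filter_map_char lS ((List.nodup_finRange n).filter _) Sum.inl p j
        (by intro b hb; rw [hp]; simp)]
      rw [if_pos]; rw [hlS, List.mem_filter]; simp [hgj]
    have hSf' : g j = false → S.filter p = [] := by
      intro hgj
      rw [hS]; apply filter_map_nil
      intro b hb
      rw [hlS, List.mem_filter] at hb
      have hbj : b ≠ j := by rintro rfl; rw [hgj] at hb; simp at hb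
      rw [hp]; simp [hbj]
    have hTf : g j = false → T.filter p = [Sum.inl j] := by
      intro hgj
      rw [hT, filter_map_char lT ((List.nodup_finRange n).filter _) Sum.inl p j
        (by intro b hb; rw [hp]; simp)]
      rw [if_pos]; rw [hlT, List.mem_filter]; simp [hgj]
    have hTf' : g j = true → T.filter p = [] := by
      intro hgj
      rw [hT]; apply filter_map_nil
      intro b hb
      rw [hlT, List.mem_filter] at hb
      have hbj : b ≠ j := by rintro rfl; rw [hgj] at hb; simp at hb
      rw [hp]; simp [hbj]
    by_cases hfi : f i = true <;> by_cases hgj : g j = true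
    · rw [filterW, hPf hfi, hSf hgj, hTf' hgj, hZf' hfi]
      simp [hfi, hgj, List.Chain', List.isChain_cons_cons]
    · have hgj' : g j = false := by simpa using hgj
      rw [filterW, hPf hfi, hTf hgj', hSf' hgj', hZf' hfi]
      simp [hfi, hgj', List.Chain', List.isChain_cons_cons]
    · have hfi' : f i = false := by simpa using hfi
      rw [filterW, hPf' hfi', hSf hgj, hTf' hgj, hZf hfi']
      simp [hfi', hgj, List.Chain', List.isChain_cons_cons]
    · have hgj' : g j = false := by simpa using hgj
      have hfi' : f i = false := by simpa using hfi
      rw [filterW, hPf' hfi', hTf hgj', hSf' hgj', hZf hfi']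
      simp [hfi', hgj', List.Chain', List.isChain_cons_cons]
  have keyrr : ∀ (i i' : Fin m), i ≠ i' → ∀ (p : (Fin n ⊕ Fin m) → Bool),
      (∀ z, p z = true ↔ (z = Sum.inr i ∨ z = Sum.inr i')) →
      ¬ (W.filter p).Chain' (· ≠ ·) := by
    intro i i' hii p hp
    have hTf : T.filter p = [] := by
      rw [hT]; apply filter_map_nil; intro b hb; rw [hp]; simp
    have hSf : S.filter p = [] := by
      rw [hS]; apply filter_map_nil; intro b hb; rw [hp]; simp
    rw [filterW, hTf, hSf]
    simp only [List.reverse_nil, List.append_nil, List.nil_append]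
    by_cases hfi : f i = true <;> by_cases hfi' : f i' = true
    · have hZf : Z.filter p = [] := by
        rw [hZ]; apply filter_map_nil
        intro b hb
        rw [hlZ, List.mem_filter] at hb
        have hb1 : b ≠ i := by rintro rfl; rw [hfi] at hb; simp at hb
        have hb2 : b ≠ i' := by rintro rfl; rw [hfi'] at hb; simp at hb
        rw [hp]; simp [hb1, hb2]
      rw [hZf]
      simp only [List.reverse_nil, List.append_nil]
      apply not_chain'_palindrome
      apply List.ne_nil_of_mem (a := Sum.inr i)
      rw [List.mem_filter]
      refine ⟨?_, ?_⟩
      · rw [hP]; simp [hlP, List.mem_filter, hfi]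
      · rw [hp]; simp
    · have hfx : f i' = false := by simpa using hfi'
      have hPf : P.filter p = [Sum.inr i] := by
        rw [hP, filter_map_char lP ((List.nodup_finRange m).filter _) Sum.inr p i ?_]
        · rw [if_pos]; rw [hlP, List.mem_filter]; simp [hfi]
        · intro b hb
          rw [hlP, List.mem_filter] at hb
          have hb2 : b ≠ i' := by rintro rfl; rw [hfx] at hb; simp at hb
          rw [hp]; simp [hb2]
      have hZf : Z.filter p = [Sum.inr i'] := by
        rw [hZ, filter_map_char lZ ((List.nodup_finRange m).filter _) Sum.inr p i' ?_]
        · rw [if_pos]; rw [hlZ, List.mem_filter]; simp [hfx]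
        · intro b hb
          rw [hlZ, List.mem_filter] at hb
          have hb1 : b ≠ i := by rintro rfl; rw [hfi] at hb; simp at hb
          rw [hp]; simp [hb1]
      rw [hPf, hZf]
      simp [List.Chain', List.isChain_cons_cons]
    · have hfx : f i = false := by simpa using hfi
      have hPf : P.filter p = [Sum.inr i'] := by
        rw [hP, filter_map_char lP ((List.nodup_finRange m).filter _) Sum.inr p i' ?_]
        · rw [if_pos]; rw [hlP, List.mem_filter]; simp [hfi']
        · intro b hb
          rw [hlP, List.mem_filter] at hb
          have hb2 : b ≠ i := by rintro rfl; rw [hfx] at hb; simp at hb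
          rw [hp]; simp [hb2]
      have hZf : Z.filter p = [Sum.inr i] := by
        rw [hZ, filter_map_char lZ ((List.nodup_finRange m).filter _) Sum.inr p i ?_]
        · rw [if_pos]; rw [hlZ, List.mem_filter]; simp [hfx]
        · intro b hb
          rw [hlZ, List.mem_filter] at hb
          have hb1 : b ≠ i' := by rintro rfl; rw [hfi'] at hb; simp at hb
          rw [hp]; simp [hb1]
      rw [hPf, hZf]
      simp [List.Chain', List.isChain_cons_cons]
    · have h1 : f i = false := by simpa using hfi
      have h2 : f i' = false := by simpa using hfi'
      have hPf : P.filter p = [] := by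
        rw [hP]; apply filter_map_nil
        intro b hb
        rw [hlP, List.mem_filter] at hb
        have hb1 : b ≠ i := by rintro rfl; rw [h1] at hb; simp at hb
        have hb2 : b ≠ i' := by rintro rfl; rw [h2] at hb; simp at hb
        rw [hp]; simp [hb1, hb2]
      rw [hPf]
      simp only [List.reverse_nil, List.append_nil, List.nil_append]
      apply not_chain'_palindrome
      apply List.ne_nil_of_mem (a := Sum.inr i)
      rw [List.mem_filter]
      refine ⟨?_, ?_⟩
      · rw [hZ]; simp [hlZ, List.mem_filter, h1]
      · rw [hp]; simp
  refine ⟨W, ?_, ?_⟩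
  · intro v
    rcases v with j | i
    · by_cases hg : g j = true <;>
        simp [hW, hT, hS, hP, hZ, hlT, hlS, List.mem_filter, hg]
    · by_cases hf : f i = true <;>
        simp [hW, hT, hS, hP, hZ, hlP, hlZ, List.mem_filter, hf]
  · intro x y hxy
    rcases x with j | i <;> rcases y with j' | i'
    · have hjj : j ≠ j' := by rintro rfl; exact hxy rfl
      exact iff_of_true (adj_ll j j' hjj) (keyll j j' _ (by intro z; simp))
    · rw [adj_lr]
      exact keylr j i' _ (by intro z; simp)
    · rw [G.adj_comm, adj_lr]
      exact keylr j' i _ (by intro z; simp [or_comm])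
    · have hii : i ≠ i' := by rintro rfl; exact hxy rfl
      exact iff_of_false (adj_rr i i') (keyrr i i' hii _ (by intro z; simp))

lemma rows_const {m n : ℕ} (A B : Fin m → Fin n → Bool)
    (hA : ∀ i, (∀ j, A i j = false) ∨ (∀ j, A i j = true))
    (hB : ∀ i, (∀ j, B i j = false) ∨ (∀ j, B i j = true)) :
    ∀ k, ∀ i : Fin (m ^ k),
      (∀ j, morphIter A B k i j = false) ∨ (∀ j, morphIter A B k i j = true) := by
  intro k
  induction k with
  | zero => intro i; left; intro j; rfl
  | succ k ih =>
    intro i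
    have hm : 0 < m := Nat.pos_of_ne_zero (fun h => by have := i.isLt; simp [h] at this)
    have hR : i.val / m < m ^ k :=
      (Nat.div_lt_iff_lt_mul hm).2 (by rw [← pow_succ]; exact i.isLt)
    have him : i.val % m < m := Nat.mod_lt _ hm
    rcases ih ⟨i.val / m, hR⟩ with h0 | h1
    · rcases hA ⟨i.val % m, him⟩ with ha | ha
      · left; intro j
        simp only [morphIter]
        rw [h0, if_neg (by simp)]
        exact ha _
      · right; intro j
        simp only [morphIter]
        rw [h0, if_neg (by simp)]
        exact ha _
    · rcases hB ⟨i.val % m, him⟩ with hb | hb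
      · left; intro j
        simp only [morphIter]
        rw [h1, if_pos rfl]
        exact hb _
      · right; intro j
        simp only [morphIter]
        rw [h1, if_pos rfl]
        exact hb _

lemma cols_const {m n : ℕ} (A B : Fin m → Fin n → Bool)
    (hA : ∀ j, (∀ i, A i j = false) ∨ (∀ i, A i j = true))
    (hB : ∀ j, (∀ i, B i j = false) ∨ (∀ i, B i j = true)) :
    ∀ k, ∀ j : Fin (n ^ k),
      (∀ i, morphIter A B k i j = false) ∨ (∀ i, morphIter A B k i j = true) := by
  intro k
  induction k with
  | zero => intro j; left; intro i; rfl
  | succ k ih =>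
    intro j
    have hn : 0 < n := Nat.pos_of_ne_zero (fun h => by have := j.isLt; simp [h] at this)
    have hC : j.val / n < n ^ k :=
      (Nat.div_lt_iff_lt_mul hn).2 (by rw [← pow_succ]; exact j.isLt)
    have hjn : j.val % n < n := Nat.mod_lt _ hn
    rcases ih ⟨j.val / n, hC⟩ with h0 | h1
    · rcases hA ⟨j.val % n, hjn⟩ with ha | ha
      · left; intro i
        simp only [morphIter]
        rw [h0, if_neg (by simp)]
        exact ha _
      · right; intro i
        simp only [morphIter]
        rw [h0, if_neg (by simp)]
        exact ha _
    · rcases hB ⟨j.val % n, hjn⟩ with hb | hb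
      · left; intro i
        simp only [morphIter]
        rw [h1, if_pos rfl]
        exact hb _
      · right; intro i
        simp only [morphIter]
        rw [h1, if_pos rfl]
        exact hb _


theorem stmt7 {m n : ℕ} (A B : Fin m → Fin n → Bool)
    (h : ((∀ i, (∀ j, A i j = false) ∨ (∀ j, A i j = true)) ∧
          (∀ i, (∀ j, B i j = false) ∨ (∀ j, B i j = true))) ∨
         ((∀ j, (∀ i, A i j = false) ∨ (∀ i, A i j = true)) ∧
          (∀ j, (∀ i, B i j = false) ∨ (∀ i, B i j = true)))) :
    ∀ k : ℕ, WordRepresentable (Gk A B k) := by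
  classical
  intro k
  rcases h with ⟨hA, hB⟩ | ⟨hA, hB⟩
  · have hrow := rows_const A B hA hB k
    have hex : ∃ f : Fin (m ^ k) → Bool,
        morphIter A B k = fun i j => f i && (fun _ : Fin (n ^ k) => true) j := by
      refine ⟨fun i => decide (∀ j, morphIter A B k i j = true), ?_⟩
      funext i j
      simp only [Bool.and_true]
      rcases hrow i with h0 | h1
      · rw [h0 j, decide_eq_false]
        intro hc
        exact absurd (hc j) (by simp [h0 j])
      · rw [h1 j, decide_eq_true h1]
    obtain ⟨f, hf⟩ := hex
    unfold Gk
    rw [hf]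
    exact rankOne_rep f (fun _ => true)
  · have hcol := cols_const A B hA hB k
    have hex : ∃ g : Fin (n ^ k) → Bool,
        morphIter A B k = fun i j => (fun _ : Fin (m ^ k) => true) i && g j := by
      refine ⟨fun j => decide (∀ i, morphIter A B k i j = true), ?_⟩
      funext i j
      simp only [Bool.true_and]
      rcases hcol j with h0 | h1
      · rw [h0 i, decide_eq_false]
        intro hc
        exact absurd (hc i) (by simp [h0 i])
      · rw [h1 i, decide_eq_true h1]
    obtain ⟨g, hg⟩ := hex
    unfold Gk
    rw [hg]
    exact rankOne_rep (fun _ => true) g
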